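/- For integers m ≥ 1 and k with gcd(m,k) = 1, the product over all complex λ with λ^{2m} = 1 of |1 + λ^m - λ^k| equals 2^m - 1. -/

import Mathlib

open Polynomial

/-- For m ≥ 1, gcd(m,k) = 1, the product over all complex λ with λ^{2m} = 1 of
|1 + λ^m - λ^k| equals 2^m - 1. -/
theorem stmt_7 (m : ℕ) (hm : 1 ≤ m) (k : ℤ) (hmk : Int.gcd (m : ℤ) k = 1) :
    ((X ^ (2 * m) - C 1 : ℂ[X]).roots.map
      (fun lam => ‖1 + lam ^ m - lam ^ k‖)).prod
      = 2 ^ m - 1 := by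
  have hm0 : m ≠ 0 := by omega
  have hp1 : (X ^ m - C 1 : ℂ[X]) ≠ 0 := (monic_X_pow_sub_C 1 hm0).ne_zero
  have hp2 : (X ^ m + C 1 : ℂ[X]) ≠ 0 := by
    have h : (X ^ m + C 1 : ℂ[X]) = X ^ m - C (-1) := by
      rw [show C (-1 : ℂ) = -C 1 from map_neg C 1, sub_neg_eq_add]
    rw [h]; exact (monic_X_pow_sub_C (-1) hm0).ne_zero
  have hfac : (X ^ (2 * m) - C 1 : ℂ[X]) = (X ^ m - C 1) * (X ^ m + C 1) := by
    rw [map_one]; ring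
  rw [hfac, roots_mul (mul_ne_zero hp1 hp2), Multiset.map_add, Multiset.prod_add]
  -- membership facts
  have hmem1 : ∀ x ∈ (X ^ m - C 1 : ℂ[X]).roots, x ^ m = 1 := by
    intro x hx
    have h2 := (mem_roots hp1).mp hx
    simpa [IsRoot, sub_eq_zero] using h2
  have hmem2 : ∀ x ∈ (X ^ m + C 1 : ℂ[X]).roots, x ^ m = -1 := by
    intro x hx
    have h2 := (mem_roots hp2).mp hx
    simp only [IsRoot, eval_add, eval_pow, eval_X, eval_C] at h2
    linear_combination h2
  have habs1 : ∀ x : ℂ, x ^ m = 1 ∨ x ^ m = -1 → ‖x‖ = 1 := by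
    intro x hx
    have h1 : ‖x‖ ^ m = 1 := by
      rw [← norm_pow]
      rcases hx with h | h <;> simp [h]
    exact (pow_left_strictMonoOn₀ (n := m) hm0).injOn
      (Set.mem_setOf.2 (norm_nonneg x)) (Set.mem_setOf.2 zero_le_one)
      (by rw [h1, one_pow])
  -- second factor contributes 1
  have hA : ((X ^ m + C 1 : ℂ[X]).roots.map
      (fun lam => ‖1 + lam ^ m - lam ^ k‖)).prod = 1 := by
    apply Multiset.prod_eq_one
    intro a ha
    obtain ⟨lam, hlam, rfl⟩ := Multiset.mem_map.mp ha
    rw [hmem2 lam hlam]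
    have : (1 : ℂ) + -1 - lam ^ k = -(lam ^ k) := by ring
    rw [this, norm_neg, norm_zpow, habs1 lam (Or.inr (hmem2 lam hlam)),
      one_zpow]
  rw [hA, mul_one]
  -- first factor
  set s : Multiset ℂ := (X ^ m - C 1 : ℂ[X]).roots with hs_def
  have hne : ∀ x ∈ s, x ≠ 0 := by
    intro x hx h0
    have := hmem1 x hx
    rw [h0, zero_pow hm0] at this
    exact zero_ne_one this
  -- Bezout
  obtain ⟨u, v, huv⟩ := (Int.isCoprime_iff_gcd_eq_one.mpr hmk)
  -- the map x ↦ x^k permutes s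
  have hcard : Multiset.card s = m := by
    rw [hs_def, splits_iff_card_roots.mp (IsAlgClosed.splits _),
      natDegree_X_pow_sub_C]
  have hnodup : s.Nodup := nodup_roots ((separable_X_pow_sub_C (1:ℂ)
    (by exact_mod_cast hm0) one_ne_zero))
  have hmapmem : ∀ x ∈ s, x ^ k ∈ s := by
    intro x hx
    have hx0 := hne x hx
    have hxm := hmem1 x hx
    have : (x ^ k) ^ m = 1 := by
      rw [← zpow_natCast (x ^ k) m, ← zpow_mul, mul_comm, zpow_mul, zpow_natCast, hxm,
        one_zpow]
    rw [hs_def, mem_roots hp1]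
    simp [IsRoot, this]
  have hinj : ∀ x ∈ s, ∀ y ∈ s, x ^ k = y ^ k → x = y := by
    intro x hx y hy hxy
    have hx0 := hne x hx; have hy0 := hne y hy
    have hxm := hmem1 x hx; have hym := hmem1 y hy
    calc x = x ^ (u * (m : ℤ) + v * k) := by rw [huv, zpow_one]
      _ = (x ^ (m:ℤ)) ^ u * (x ^ k) ^ v := by
          rw [zpow_add₀ hx0, mul_comm u (m:ℤ), mul_comm v k, zpow_mul, zpow_mul]
      _ = (y ^ (m:ℤ)) ^ u * (y ^ k) ^ v := by
          rw [hxy, zpow_natCast, hxm, zpow_natCast, hym]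
      _ = y ^ (u * (m : ℤ) + v * k) := by
          rw [zpow_add₀ hy0, mul_comm u (m:ℤ), mul_comm v k, zpow_mul, zpow_mul]
      _ = y := by rw [huv, zpow_one]
  have hperm : s.map (fun x => x ^ k) = s := by
    have hnd : (s.map (fun x => x ^ k)).Nodup := hnodup.map_on hinj
    have hle : s.map (fun x => x ^ k) ≤ s := by
      rw [Multiset.le_iff_subset hnd]
      intro a ha
      obtain ⟨x, hx, rfl⟩ := Multiset.mem_map.mp ha
      exact hmapmem x hx
    exact Multiset.eq_of_le_of_card_le hle (by rw [Multiset.card_map])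
  -- rewrite the product
  have step1 : s.map (fun lam => ‖1 + lam ^ m - lam ^ k‖)
      = s.map (fun lam => ‖2 - lam ^ k‖) := by
    apply Multiset.map_congr rfl
    intro x hx
    rw [hmem1 x hx]
    norm_num
  have step2 : s.map (fun lam => ‖2 - lam ^ k‖)
      = (s.map (fun x => x ^ k)).map (fun x => ‖2 - x‖) := by
    rw [Multiset.map_map]; rfl
  rw [step1, step2, hperm]
  -- compute the product of (2 - λ)
  have hpoly : (X ^ m - C 1 : ℂ[X]) = (s.map (fun a => X - C a)).prod := by
    conv_lhs => rw [(IsAlgClosed.splits _).eq_prod_roots_of_monic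
      (monic_X_pow_sub_C 1 hm0)]
  have hprod : (s.map (fun x => (2:ℂ) - x)).prod = 2 ^ m - 1 := by
    have := congrArg (eval 2) hpoly
    simp only [eval_sub, eval_pow, eval_X, eval_C, eval_one, eval_multiset_prod,
      Multiset.map_map, Function.comp] at this
    simpa using this.symm
  rw [show (fun x : ℂ => ‖2 - x‖) = (normHom : ℂ →*₀ ℝ) ∘ (fun x : ℂ => 2 - x)
    from rfl, ← Multiset.map_map, ← map_multiset_prod, hprod, normHom_apply]
  rw [show ((2:ℂ) ^ m - 1) = (((2:ℝ) ^ m - 1 : ℝ) : ℂ) by push_cast; ring,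
    Complex.norm_real, Real.norm_eq_abs, abs_of_nonneg (sub_nonneg.mpr (one_le_pow₀ (by norm_num)))]
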